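/- Let η ≠ 0, σ > 0, β be real with σ^2 > 4β^2 and β ≠ 0. Define a(x) = sqrt(L(x)) with L(x) = σ*e^{2ηx} - β^2*e^{4ηx} - 1, b(x) = -β*e^{2ηx}, and c(x) = a(x) - a'(x)/η, on the open interval where L(x) > 0. Then a(x)*c(x) - b(x)^2 = -1 for all x in that interval. -/

import Mathlib

theorem stmt_5 (η σ β : ℝ) (hη : η ≠ 0) (hσ : 0 < σ)
    (hdisc : σ ^ 2 > 4 * β ^ 2) (hβ : β ≠ 0)
    (L a b c : ℝ → ℝ)
    (hL : ∀ x, L x = σ * Real.exp (2 * η * x) - β ^ 2 * Real.exp (4 * η * x) - 1)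
    (ha : ∀ x, a x = Real.sqrt (L x))
    (hb : ∀ x, b x = -β * Real.exp (2 * η * x))
    (hc : ∀ x, c x = a x - deriv a x / η) :
    ∀ x, L x > 0 → a x * c x - (b x) ^ 2 = -1 := by
  intro x hx
  have hLfun : L = fun y => σ * Real.exp (2 * η * y) - β ^ 2 * Real.exp (4 * η * y) - 1 :=
    funext hL
  have hLd : HasDerivAt L (σ * (Real.exp (2 * η * x) * (2 * η))
      - β ^ 2 * (Real.exp (4 * η * x) * (4 * η))) x := by
    rw [hLfun]
    have h1 : HasDerivAt (fun y : ℝ => 2 * η * y) (2 * η) x := by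
      simpa using (hasDerivAt_id x).const_mul (2 * η)
    have h2 : HasDerivAt (fun y : ℝ => 4 * η * y) (4 * η) x := by
      simpa using (hasDerivAt_id x).const_mul (4 * η)
    exact (((h1.exp.const_mul σ).sub (h2.exp.const_mul (β ^ 2))).sub_const 1)
  have hLx : L x ≠ 0 := ne_of_gt hx
  have had : HasDerivAt a ((σ * (Real.exp (2 * η * x) * (2 * η))
      - β ^ 2 * (Real.exp (4 * η * x) * (4 * η))) / (2 * Real.sqrt (L x))) x := by
    have : a = fun y => Real.sqrt (L y) := funext ha
    rw [this]
    simpa [Function.comp_def, mul_comm, div_eq_mul_inv] using (Real.hasDerivAt_sqrt hLx).comp x hLd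
  have hderiv := had.deriv
  have hsq : Real.sqrt (L x) ^ 2 = L x := Real.sq_sqrt hx.le
  have hsqpos : 0 < Real.sqrt (L x) := Real.sqrt_pos.mpr hx
  have hE : Real.exp (4 * η * x) = Real.exp (2 * η * x) ^ 2 := by
    rw [show (4:ℝ) * η * x = 2 * η * x + 2 * η * x by ring, Real.exp_add, sq]
  rw [hc x, hb, ha, hderiv]
  field_simp
  have hE' : Real.exp (η * x * 4) = Real.exp (2 * η * x) ^ 2 := by rw [← hE]; ring_nf
  linear_combination 2*hsq + 2*(hL x) + 4*β^2*hE' - 2*β^2*hE
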